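/- Let β ∈ 𝒜. If ν* ∈ N_β is an X-circuit of 𝒜, then the set {α ∈ 𝒜 : ν*_α > 0} is affinely independent in ℝⁿ. (In particular, an X-circuit has at most n+2 nonzero entries.) -/

import Mathlib

open Finset

/-- Dot product on `Fin n → ℝ`. -/
noncomputable def dotp {n : ℕ} (y x : Fin n → ℝ) : ℝ := ∑ i, y i * x i

/-- Support function `σ_X : ℝⁿ → ℝ ∪ {±∞}` of a set `X ⊆ ℝⁿ`. -/
noncomputable def suppFn {n : ℕ} (X : Set (Fin n → ℝ)) (y : Fin n → ℝ) : EReal :=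
  ⨆ x ∈ X, ((dotp y x : ℝ) : EReal)

/-- The linear map `𝒜 : ℝ^𝒜 → ℝⁿ`, `ν ↦ Σ_α ν_α α`. -/
noncomputable def Amap {n m : ℕ} (A : Fin m → Fin n → ℝ) (ν : Fin m → ℝ) : Fin n → ℝ :=
  fun j => ∑ i, ν i * A i j

/-- `N_β = {ν : ν_α ≥ 0 (α ≠ β), Σ ν_α = 0}`. -/
def Nbeta {m : ℕ} (b : Fin m) : Set (Fin m → ℝ) :=
  {ν | (∀ i, i ≠ b → 0 ≤ ν i) ∧ ∑ i, ν i = 0}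

/-- Two vectors are proportional if one is a scalar multiple of the other. -/
def Proportional {m : ℕ} (u v : Fin m → ℝ) : Prop :=
  ∃ t : ℝ, u = t • v ∨ v = t • u

/-- The augmented support function `ν ↦ σ_X(-𝒜ν)`. -/
noncomputable def sigA {n m : ℕ} (X : Set (Fin n → ℝ)) (A : Fin m → Fin n → ℝ)
    (ν : Fin m → ℝ) : EReal :=
  suppFn X (-(Amap A ν))

/-- The map `ν ↦ σ_X(-𝒜ν)` is affine on the segment `[ν1, ν2]`. -/
def SigmaAffineOnSeg {n m : ℕ} (X : Set (Fin n → ℝ)) (A : Fin m → Fin n → ℝ)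
    (ν1 ν2 : Fin m → ℝ) : Prop :=
  ∀ t : ℝ, t ∈ Set.Icc (0:ℝ) 1 →
    sigA X A (t • ν1 + (1 - t) • ν2) =
      (t : EReal) * sigA X A ν1 + ((1 - t : ℝ) : EReal) * sigA X A ν2

/-- `ν` is an `X`-circuit of `𝒜` (with negative index allowed only at `b`). -/
def IsXCircuit {n m : ℕ} (X : Set (Fin n → ℝ)) (A : Fin m → Fin n → ℝ)
    (b : Fin m) (ν : Fin m → ℝ) : Prop :=
  ν ∈ Nbeta b ∧ ν ≠ 0 ∧ sigA X A ν < ⊤ ∧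
  ¬ ∃ (ν1 ν2 : Fin m → ℝ) (θ : ℝ), ν1 ∈ Nbeta b ∧ ν2 ∈ Nbeta b ∧
      ¬ Proportional ν1 ν2 ∧ θ ∈ Set.Ioo (0:ℝ) 1 ∧
      ν = θ • ν1 + (1 - θ) • ν2 ∧ SigmaAffineOnSeg X A ν1 ν2

/-- All finite nonnegative combinations of elements of `S` (including `0`). -/
def coneHull {E : Type*} [AddCommMonoid E] [SMul ℝ E] (S : Set E) : Set E :=
  {x | ∃ (k : ℕ) (t : Fin k → ℝ) (v : Fin k → E),
    (∀ j, 0 ≤ t j) ∧ (∀ j, v j ∈ S) ∧ x = ∑ j, t j • v j}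

/-- `v` is an edge generator of the convex cone `K`. -/
def IsEdgeGenerator {E : Type*} [AddCommMonoid E] [SMul ℝ E] (K : Set E) (v : E) : Prop :=
  v ≠ 0 ∧ v ∈ K ∧ ∀ u ∈ K, ∀ w ∈ K, v = u + w →
    (∃ a : ℝ, 0 ≤ a ∧ u = a • v) ∧ (∃ b : ℝ, 0 ≤ b ∧ w = b • v)

/-- The `X`-AGE cone `C_X(𝒜, β)`, as a cone of coefficient vectors. -/
def AgeCone {n m : ℕ} (X : Set (Fin n → ℝ)) (A : Fin m → Fin n → ℝ) (b : Fin m) :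
    Set (Fin m → ℝ) :=
  {c | (∀ i, i ≠ b → 0 ≤ c i) ∧ ∀ x ∈ X, 0 ≤ ∑ i, c i * Real.exp (dotp (A i) x)}

/-- The `X`-SAGE cone `C_X(𝒜) = Σ_β C_X(𝒜, β)`. -/
def Sage {n m : ℕ} (X : Set (Fin n → ℝ)) (A : Fin m → Fin n → ℝ) : Set (Fin m → ℝ) :=
  {c | ∃ f : Fin m → (Fin m → ℝ), (∀ b, f b ∈ AgeCone X A b) ∧ c = ∑ b, f b}

/-- One summand of the relative entropy, with the conventions `0·log 0 = 0` and
`D = ∞` if `a > 0` while `c ≤ 0`. -/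
noncomputable def relEnt (a c : ℝ) : EReal :=
  if a = 0 then 0 else if 0 < c then ((a * Real.log (a / c) : ℝ) : EReal) else ⊤

/-- The relative entropy `D(ν_{∖β}, e · c_{∖β})`. -/
noncomputable def relEntSum {m : ℕ} (b : Fin m) (ν c : Fin m → ℝ) : EReal :=
  ∑ i ∈ Finset.univ.erase b, relEnt (ν i) (Real.exp 1 * c i)

/-- Condition (★): `ν ∈ N_β`, `ν ≠ 0`, `σ_X(-𝒜ν) + D(ν_{∖β}, e c_{∖β}) ≤ c_β`. -/
def StarCond {n m : ℕ} (X : Set (Fin n → ℝ)) (A : Fin m → Fin n → ℝ)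
    (b : Fin m) (c ν : Fin m → ℝ) : Prop :=
  ν ∈ Nbeta b ∧ ν ≠ 0 ∧ sigA X A ν + relEntSum b ν c ≤ (c b : EReal)

/-- The `λ`-witnessed AGE cone `C_X(𝒜, λ)` for a normalized `λ` with `λ_β = -1`. -/
noncomputable def WitnessCone {n m : ℕ} (X : Set (Fin n → ℝ)) (A : Fin m → Fin n → ℝ)
    (b : Fin m) (l : Fin m → ℝ) : Set (Fin m → ℝ) :=
  {c | (∀ i, i ≠ b → 0 ≤ c i) ∧
    (-(c b)) * Real.exp ((sigA X A l).toReal) ≤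
      ∏ i ∈ Finset.univ.filter (fun i => 0 < l i), (c i / l i) ^ (l i)}

/-- Normalized `X`-circuits in `N_β`. -/
def LambdaB {n m : ℕ} (X : Set (Fin n → ℝ)) (A : Fin m → Fin n → ℝ) (b : Fin m) :
    Set (Fin m → ℝ) :=
  {l | IsXCircuit X A b l ∧ l b = -1}

/-- All normalized `X`-circuits of `𝒜`. -/
def Lambda {n m : ℕ} (X : Set (Fin n → ℝ)) (A : Fin m → Fin n → ℝ) : Set (Fin m → ℝ) :=
  ⋃ b, LambdaB X A b

/-- Functional form `φ_λ = (λ, σ_X(-𝒜λ)) ∈ ℝ^𝒜 × ℝ`. -/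
noncomputable def phiVec {n m : ℕ} (X : Set (Fin n → ℝ)) (A : Fin m → Fin n → ℝ)
    (l : Fin m → ℝ) : (Fin m → ℝ) × ℝ :=
  (l, (sigA X A l).toReal)

/-- Functional form as an affine function `φ_λ(y) = Σ y_α λ_α + σ_X(-𝒜λ)`. -/
noncomputable def phiFun {n m : ℕ} (X : Set (Fin n → ℝ)) (A : Fin m → Fin n → ℝ)
    (l : Fin m → ℝ) (y : Fin m → ℝ) : ℝ :=
  (∑ i, y i * l i) + (sigA X A l).toReal

/-- The circuit graph `G_X(𝒜)`. -/
noncomputable def circuitGraph {n m : ℕ} (X : Set (Fin n → ℝ)) (A : Fin m → Fin n → ℝ) :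
    Set ((Fin m → ℝ) × ℝ) :=
  coneHull ((phiVec X A '' Lambda X A) ∪ {((0 : Fin m → ℝ), (1 : ℝ))})

/-- The reduced normalized `X`-circuits `Λ*_X(𝒜)`. -/
noncomputable def LambdaStar {n m : ℕ} (X : Set (Fin n → ℝ)) (A : Fin m → Fin n → ℝ) :
    Set (Fin m → ℝ) :=
  {l | l ∈ Lambda X A ∧ IsEdgeGenerator (circuitGraph X A) (phiVec X A l)}

/-- `λ`-witnessed AGE cone for a normalized circuit, with `β` recovered from `λ`. -/
noncomputable def WitnessConeL {n m : ℕ} (X : Set (Fin n → ℝ)) (A : Fin m → Fin n → ℝ)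
    (l : Fin m → ℝ) : Set (Fin m → ℝ) :=
  ⋃ b ∈ {b : Fin m | l b = -1}, WitnessCone X A b l

/-- Dual cone of a set of coefficient vectors in `ℝ^𝒜`. -/
def dualConeV {m : ℕ} (K : Set (Fin m → ℝ)) : Set (Fin m → ℝ) :=
  {v | ∀ c ∈ K, 0 ≤ ∑ i, v i * c i}

/-- Dual cone of a subset of `ℝ^𝒜 × ℝ`. -/
def dualConeP {m : ℕ} (K : Set ((Fin m → ℝ) × ℝ)) : Set ((Fin m → ℝ) × ℝ) :=
  {p | ∀ q ∈ K, 0 ≤ (∑ i, p.1 i * q.1 i) + p.2 * q.2}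

/-- The basis functions `x ↦ exp(αᵀx)`, `α ∈ 𝒜`, are linearly independent on `X`. -/
def ExpLinIndep {n m : ℕ} (X : Set (Fin n → ℝ)) (A : Fin m → Fin n → ℝ) : Prop :=
  LinearIndependent ℝ (fun i : Fin m => fun x : X => Real.exp (dotp (A i) (x : Fin n → ℝ)))

/-- `X` is a polyhedron: an intersection of finitely many closed halfspaces. -/
def IsPolyhedron {n : ℕ} (X : Set (Fin n → ℝ)) : Prop :=
  ∃ (k : ℕ) (a : Fin k → Fin n → ℝ) (bb : Fin k → ℝ),
    X = {x | ∀ i, dotp (a i) x ≤ bb i}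

/-- Minkowski sum `Σ_{l ∈ Λ} C(l)` (finite sums, one summand per `l`;
the empty sum gives `{0}`). -/
def MinkSumOver {m : ℕ} (Λ : Set (Fin m → ℝ)) (C : (Fin m → ℝ) → Set (Fin m → ℝ)) :
    Set (Fin m → ℝ) :=
  {c | ∃ (s : Finset (Fin m → ℝ)) (f : (Fin m → ℝ) → (Fin m → ℝ)),
    (↑s ⊆ Λ) ∧ (∀ l ∈ s, f l ∈ C l) ∧ c = ∑ l ∈ s, f l}

theorem statement0 {n m : ℕ} (X : Set (Fin n → ℝ)) (hXne : X.Nonempty) (hXcl : IsClosed X)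
    (hXcv : Convex ℝ X) (A : Fin m → Fin n → ℝ) (hA : Function.Injective A) (hm : 0 < m)
    (b : Fin m) (ν : Fin m → ℝ) (hν : IsXCircuit X A b ν) :
    AffineIndependent ℝ (Subtype.val : ↥(A '' {i : Fin m | 0 < ν i}) → (Fin n → ℝ)) := by
  classical
  obtain ⟨⟨hnn, hsum⟩, hν0, hfin, hdec⟩ := hν
  -- ν b < 0
  have hνble : ν b ≤ 0 := by
    have h1 : ν b + ∑ i ∈ Finset.univ.erase b, ν i = 0 := by
      rw [Finset.add_sum_erase _ _ (Finset.mem_univ b)]; exact hsum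
    have h2 : 0 ≤ ∑ i ∈ Finset.univ.erase b, ν i :=
      Finset.sum_nonneg fun i hi => hnn i (Finset.ne_of_mem_erase hi)
    linarith
  have hνb : ν b < 0 := by
    rcases lt_or_eq_of_le hνble with h | h
    · exact h
    · exfalso
      apply hν0
      funext i
      have hall : ∀ i ∈ Finset.univ, (0:ℝ) ≤ ν i := by
        intro i _
        by_cases hib : i = b
        · rw [hib, h]
        · exact hnn i hib
      exact (Finset.sum_eq_zero_iff_of_nonneg hall).mp hsum i (Finset.mem_univ i)
  rw [← affineIndependent_equiv (Equiv.Set.image A {i : Fin m | 0 < ν i} hA)]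
  have heq : (Subtype.val ∘ (Equiv.Set.image A {i : Fin m | 0 < ν i} hA))
      = fun i : {i : Fin m | 0 < ν i} => A i := rfl
  rw [heq, affineIndependent_iff_of_fintype]
  intro w hw hvs i₀
  by_contra hw0
  -- extend w by zero
  set μ : Fin m → ℝ := fun i => if h : 0 < ν i then w ⟨i, h⟩ else 0 with hμdef
  have hμpos : ∀ i (h : 0 < ν i), μ i = w ⟨i, h⟩ := fun i h => dif_pos h
  have hμzero : ∀ i, ¬ 0 < ν i → μ i = 0 := fun i h => dif_neg h
  have hμb : μ b = 0 := hμzero b (not_lt.mpr hνble)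
  have hμne : μ ≠ 0 := by
    intro hc
    apply hw0
    have := congrFun hc (i₀ : Fin m)
    rwa [hμpos _ i₀.2, Subtype.coe_eta, Pi.zero_apply] at this
  -- subtype sums
  have hsubsum : ∀ g : Fin m → ℝ, (∀ i, ¬ 0 < ν i → g i = 0) →
      ∑ i : {i : Fin m | 0 < ν i}, g i = ∑ i, g i := by
    intro g hg
    rw [← Finset.sum_filter_of_ne (p := fun i => 0 < ν i)
      (fun x _ hx => by by_contra hc; exact hx (hg x hc))]
    exact (Finset.sum_subtype _ (fun x => by simp) g).symm
  have hμsum : ∑ i, μ i = 0 := by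
    rw [← hsubsum μ hμzero]
    rw [show ∑ i : {i : Fin m | 0 < ν i}, μ i = ∑ i : {i : Fin m | 0 < ν i}, w i from
      Finset.sum_congr rfl fun i _ => by rw [hμpos _ i.2, Subtype.coe_eta]]
    exact hw
  have hμA : ∀ j, ∑ i, μ i * A i j = 0 := by
    intro j
    rw [Finset.weightedVSub_eq_linear_combination _ hw] at hvs
    have := congrFun hvs j
    rw [Finset.sum_apply] at this
    simp only [Pi.smul_apply, smul_eq_mul, Pi.zero_apply] at this
    rw [← hsubsum (fun i => μ i * A i j) (fun i h => by rw [hμzero i h, zero_mul])]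
    rw [show ∑ i : {i : Fin m | 0 < ν i}, μ i * A i j
        = ∑ i : {i : Fin m | 0 < ν i}, w i * A i j from
      Finset.sum_congr rfl fun i _ => by rw [hμpos _ i.2, Subtype.coe_eta]]
    exact this
  -- choose epsilon
  set P : Finset (Fin m) := Finset.univ.filter (fun i => 0 < ν i) with hPdef
  have hPne : P.Nonempty := ⟨(i₀ : Fin m), by simp only [hPdef, Finset.mem_filter]; exact ⟨Finset.mem_univ _, i₀.2⟩⟩
  set δ : ℝ := P.inf' hPne ν with hδdef
  have hδpos : 0 < δ := by
    rw [hδdef, Finset.lt_inf'_iff]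
    intro i hi
    exact (Finset.mem_filter.mp hi).2
  set M : ℝ := Finset.univ.sup' ⟨b, Finset.mem_univ b⟩ (fun i => |μ i|) with hMdef
  have hMnn : 0 ≤ M := le_trans (abs_nonneg (μ b)) (Finset.le_sup' (fun i => |μ i|) (Finset.mem_univ b))
  set ε : ℝ := δ / (M + 1) with hεdef
  have hεpos : 0 < ε := div_pos hδpos (by linarith)
  have hbound : ∀ i, 0 < ν i → ε * |μ i| ≤ ν i := by
    intro i hi
    have h1 : |μ i| ≤ M := Finset.le_sup' (fun i => |μ i|) (Finset.mem_univ i)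
    have h2 : δ ≤ ν i := Finset.inf'_le _ (by simp [hPdef, hi])
    have h3 : ε * (M + 1) = δ := by
      rw [hεdef]; field_simp
    nlinarith [hεpos.le, abs_nonneg (μ i)]
  -- membership in Nbeta
  have hmem : ∀ s : ℝ, |s| ≤ ε → (ν + s • μ) ∈ Nbeta b := by
    intro s hs
    constructor
    · intro i hib
      by_cases hi : 0 < ν i
      · have h1 : |s * μ i| ≤ ε * |μ i| := by
          rw [abs_mul]
          exact mul_le_mul_of_nonneg_right hs (abs_nonneg _)
        have h2 := hbound i hi
        have h3 := neg_abs_le (s * μ i)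
        simp only [Pi.add_apply, Pi.smul_apply, smul_eq_mul]
        linarith
      · simp only [Pi.add_apply, Pi.smul_apply, smul_eq_mul, hμzero i hi, mul_zero, add_zero]
        exact hnn i hib
    · simp only [Pi.add_apply, Pi.smul_apply, smul_eq_mul]
      rw [Finset.sum_add_distrib, ← Finset.mul_sum, hsum, hμsum, mul_zero, add_zero]
  -- Amap is unchanged
  have hAs : ∀ s : ℝ, Amap A (ν + s • μ) = Amap A ν := by
    intro s
    funext j
    unfold Amap
    simp only [Pi.add_apply, Pi.smul_apply, smul_eq_mul, add_mul]
    rw [Finset.sum_add_distrib]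
    have : ∑ i, s * μ i * A i j = s * ∑ i, μ i * A i j := by
      rw [Finset.mul_sum]; exact Finset.sum_congr rfl fun i _ => by ring
    rw [this, hμA j, mul_zero, add_zero]
  have hsig : ∀ s : ℝ, sigA X A (ν + s • μ) = sigA X A ν := by
    intro s; unfold sigA; rw [hAs]
  -- sigA X A ν is a real number
  obtain ⟨x₀, hx₀⟩ := hXne
  have hSbot : sigA X A ν ≠ ⊥ := by
    have hle : ((dotp (-(Amap A ν)) x₀ : ℝ) : EReal) ≤ sigA X A ν := by
      unfold sigA suppFn
      exact le_iSup₂ (f := fun x (_ : x ∈ X) => ((dotp (-(Amap A ν)) x : ℝ) : EReal)) x₀ hx₀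
    intro hc
    rw [hc, le_bot_iff] at hle
    exact (EReal.coe_ne_bot _) hle
  obtain ⟨r, hr⟩ : ∃ r : ℝ, sigA X A ν = (r : EReal) :=
    ⟨(sigA X A ν).toReal, (EReal.coe_toReal (ne_top_of_lt hfin) hSbot).symm⟩
  -- construct the decomposition
  apply hdec
  refine ⟨ν + ε • μ, ν + (-ε) • μ, 1/2, hmem ε (by rw [abs_of_pos hεpos]),
    hmem (-ε) (by rw [abs_neg, abs_of_pos hεpos]), ?_, by norm_num, ?_, ?_⟩
  · -- not proportional
    rintro ⟨t, ht | ht⟩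
    · have hb' := congrFun ht b
      simp only [Pi.add_apply, Pi.smul_apply, smul_eq_mul, hμb, mul_zero, add_zero] at hb'
      have ht1 : t = 1 := by
        have : (1 - t) * ν b = 0 := by linarith
        rcases mul_eq_zero.mp this with h | h
        · linarith
        · exact absurd h hνb.ne
      apply hμne
      funext i
      have := congrFun ht i
      rw [ht1] at this
      simp only [Pi.add_apply, Pi.smul_apply, smul_eq_mul, one_mul, Pi.zero_apply] at this ⊢
      nlinarith [hεpos]
    · have hb' := congrFun ht b
      simp only [Pi.add_apply, Pi.smul_apply, smul_eq_mul, hμb, mul_zero, add_zero] at hb'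
      have ht1 : t = 1 := by
        have : (1 - t) * ν b = 0 := by linarith
        rcases mul_eq_zero.mp this with h | h
        · linarith
        · exact absurd h hνb.ne
      apply hμne
      funext i
      have := congrFun ht i
      rw [ht1] at this
      simp only [Pi.add_apply, Pi.smul_apply, smul_eq_mul, one_mul, Pi.zero_apply] at this ⊢
      nlinarith [hεpos]
  · -- ν = 1/2 ν1 + 1/2 ν2
    funext i
    simp only [Pi.add_apply, Pi.smul_apply, smul_eq_mul]
    ring
  · -- affine on segment
    intro t _
    have hcomb : t • (ν + ε • μ) + (1 - t) • (ν + (-ε) • μ)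
        = ν + ((2*t - 1) * ε) • μ := by
      funext i
      simp only [Pi.add_apply, Pi.smul_apply, smul_eq_mul]
      ring
    rw [hcomb, hsig, hsig ε, hsig (-ε), hr]
    rw [← EReal.coe_mul, ← EReal.coe_mul, ← EReal.coe_add]
    norm_cast
    ring
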